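/- Let n ≥ 2, p ∈ (0,1), q < 0, p' = p/(p-1), and α, β ∈ ℝ satisfy α + n > 0, 0 ≤ β(1-p') + n < 1, and (α+n)/q + (β(1-p')+n)/p' ≥ 1/q + 1/p'. Then the infimum over r > 0 of (∫_0^r (sinh ρ)^{α+n-1} dρ)^{1/q} · (∫_r^∞ (sinh ρ)^{β(1-p')+n-1} dρ)^{1/p'} is strictly positive. (Note that α + n > 0 makes the first integral finite and β(1-p') + n < 1 makes the second integral finite, and both integrals are strictly positive, so each factor is a positive real raised to a negative power.) -/

import Mathlib

open MeasureTheory Set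

lemma aux_sinh_le_self_mul_exp {x : ℝ} (hx : 0 ≤ x) : Real.sinh x ≤ x * Real.exp x := by
  have h1 : (-(2*x)) + 1 ≤ Real.exp (-(2*x)) := Real.add_one_le_exp _
  have h2 : Real.exp (-(2*x)) * Real.exp x = Real.exp (-x) := by
    rw [← Real.exp_add]; ring_nf
  have h3 : (0:ℝ) < Real.exp x := Real.exp_pos x
  rw [Real.sinh_eq]
  nlinarith [Real.exp_pos (-x)]

lemma aux_self_le_sinh {x : ℝ} (hx : 0 ≤ x) : x ≤ Real.sinh x :=
  Real.self_le_sinh_iff.2 hx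

lemma aux_sinh_ge_exp {r ρ : ℝ} (hρ : r ≤ ρ) :
    (1 - Real.exp (-(2*r)))/2 * Real.exp ρ ≤ Real.sinh ρ := by
  have h : Real.exp (-(2*ρ)) * Real.exp ρ = Real.exp (-ρ) := by
    rw [← Real.exp_add]; ring_nf
  have h2 : Real.exp (-(2*ρ)) ≤ Real.exp (-(2*r)) := Real.exp_le_exp.2 (by linarith)
  rw [Real.sinh_eq]
  nlinarith [Real.exp_pos ρ]

lemma aux_sinh_le_exp {x : ℝ} : Real.sinh x ≤ Real.exp x := by
  rw [Real.sinh_eq]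
  nlinarith [Real.exp_pos (-x), Real.exp_pos x]

lemma aux_quarter_exp_le_sinh {ρ : ℝ} (hρ : 1 ≤ ρ) : Real.exp ρ / 4 ≤ Real.sinh ρ := by
  have h := aux_sinh_ge_exp (r := 1) hρ
  have h2 : Real.exp (-(2*1)) ≤ 1/3 := by
    have := Real.add_one_le_exp (2:ℝ)
    have h3 : Real.exp (-(2:ℝ)) * Real.exp 2 = 1 := by rw [← Real.exp_add]; norm_num
    nlinarith [Real.exp_pos (-(2:ℝ))]
  nlinarith [Real.exp_pos ρ]

lemma aux_sinh_rpow_le {A r x : ℝ} (hx : 0 < x) (hxr : x ≤ r) :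
    Real.sinh x ^ A ≤ max 1 (Real.exp (r*A)) * x ^ A := by
  have hxA : (0:ℝ) ≤ x ^ A := Real.rpow_nonneg hx.le A
  rcases le_or_gt 0 A with hA | hA
  · have h1 : Real.sinh x ≤ x * Real.exp r :=
      (aux_sinh_le_self_mul_exp hx.le).trans
        (by nlinarith [Real.exp_le_exp.2 hxr, Real.exp_pos x])
    calc Real.sinh x ^ A ≤ (x * Real.exp r) ^ A :=
          Real.rpow_le_rpow (Real.sinh_pos_iff.2 hx).le h1 hA
      _ = Real.exp (r*A) * x ^ A := by
          rw [Real.mul_rpow hx.le (Real.exp_pos r).le, Real.exp_mul, mul_comm]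
      _ ≤ max 1 (Real.exp (r*A)) * x ^ A :=
          mul_le_mul_of_nonneg_right (le_max_right _ _) hxA
  · calc Real.sinh x ^ A ≤ x ^ A :=
        Real.rpow_le_rpow_of_nonpos hx (aux_self_le_sinh hx.le) hA.le
      _ ≤ max 1 (Real.exp (r*A)) * x ^ A := by
        nlinarith [le_max_left (1:ℝ) (Real.exp (r*A))]

lemma aux_contOn {A : ℝ} {s : Set ℝ} (hs : s ⊆ Ioi 0) :
    ContinuousOn (fun ρ => Real.sinh ρ ^ A) s := fun x hx =>
  (Real.continuous_sinh.continuousAt.rpow_const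
    (Or.inl (ne_of_gt (Real.sinh_pos_iff.2 (hs hx))))).continuousWithinAt

lemma aux_integrableF {A : ℝ} (hA : -1 < A) {r : ℝ} (hr : 0 < r) :
    IntegrableOn (fun ρ => Real.sinh ρ ^ A) (Ioo 0 r) := by
  have hmeas : AEStronglyMeasurable (fun ρ => Real.sinh ρ ^ A)
      (volume.restrict (Ioo 0 r)) :=
    (aux_contOn (Ioo_subset_Ioi_self)).aestronglyMeasurable measurableSet_Ioo
  have hg : IntegrableOn (fun x : ℝ => max 1 (Real.exp (r*A)) * x ^ A) (Ioo 0 r) := by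
    have := (intervalIntegral.intervalIntegrable_rpow' (a := 0) (b := r) hA)
    rw [intervalIntegrable_iff_integrableOn_Ioo_of_le hr.le] at this
    exact this.const_mul _
  refine Integrable.mono' hg hmeas ?_
  filter_upwards [ae_restrict_mem measurableSet_Ioo] with x hx
  rw [Real.norm_eq_abs, abs_of_nonneg (Real.rpow_nonneg (Real.sinh_pos_iff.2 hx.1).le A)]
  exact aux_sinh_rpow_le hx.1 hx.2.le

lemma aux_integrableG {E : ℝ} (hE : E < 0) {r : ℝ} (hr : 0 < r) :
    IntegrableOn (fun ρ => Real.sinh ρ ^ E) (Ioi r) := by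
  set c : ℝ := (1 - Real.exp (-(2*r)))/2 with hc
  have hcpos : 0 < c := by
    have : Real.exp (-(2*r)) < 1 := Real.exp_lt_one_iff.2 (by linarith)
    simp only [hc]; linarith
  have hmeas : AEStronglyMeasurable (fun ρ => Real.sinh ρ ^ E)
      (volume.restrict (Ioi r)) :=
    (aux_contOn (fun x hx => lt_trans hr hx)).aestronglyMeasurable
      measurableSet_Ioi
  have hg : IntegrableOn (fun x : ℝ => c ^ E * Real.exp (-(-E) * x)) (Ioi r) :=
    (exp_neg_integrableOn_Ioi r (neg_pos.2 hE)).const_mul _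
  refine Integrable.mono' hg hmeas ?_
  filter_upwards [ae_restrict_mem measurableSet_Ioi] with x hx
  have hx0 : 0 < x := lt_trans hr hx
  rw [Real.norm_eq_abs, abs_of_nonneg (Real.rpow_nonneg (Real.sinh_pos_iff.2 hx0).le E)]
  have h1 : c * Real.exp x ≤ Real.sinh x := aux_sinh_ge_exp hx.le
  calc Real.sinh x ^ E ≤ (c * Real.exp x) ^ E :=
      Real.rpow_le_rpow_of_nonpos (by positivity) h1 hE.le
    _ = c ^ E * Real.exp (-(-E) * x) := by
      rw [Real.mul_rpow hcpos.le (Real.exp_pos x).le, ← Real.exp_mul]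
      ring_nf

lemma aux_Fpos {A : ℝ} (hA : -1 < A) {r : ℝ} (hr : 0 < r) :
    0 < ∫ ρ in Ioo 0 r, Real.sinh ρ ^ A := by
  rw [setIntegral_pos_iff_support_of_nonneg_ae ?_ (aux_integrableF hA hr)]
  · refine lt_of_lt_of_le ?_ (measure_mono (t := Function.support (fun ρ => Real.sinh ρ ^ A) ∩ Ioo 0 r) (s := Ioo 0 r) ?_)
    · exact (Measure.measure_Ioo_pos volume).2 hr
    · intro x hx
      exact ⟨ne_of_gt (Real.rpow_pos_of_pos (Real.sinh_pos_iff.2 hx.1) A), hx⟩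
  · filter_upwards [ae_restrict_mem measurableSet_Ioo] with x hx
    exact (Real.rpow_pos_of_pos (Real.sinh_pos_iff.2 hx.1) A).le

lemma aux_Gpos {E : ℝ} (hE : E < 0) {r : ℝ} (hr : 0 < r) :
    0 < ∫ ρ in Ioi r, Real.sinh ρ ^ E := by
  rw [setIntegral_pos_iff_support_of_nonneg_ae ?_ (aux_integrableG hE hr)]
  · refine lt_of_lt_of_le ?_ (measure_mono (t := Function.support (fun ρ => Real.sinh ρ ^ E) ∩ Ioi r) (s := Ioo r (r+1)) ?_)
    · exact (Measure.measure_Ioo_pos volume).2 (by linarith)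
    · intro x hx
      exact ⟨ne_of_gt (Real.rpow_pos_of_pos (Real.sinh_pos_iff.2 (lt_trans hr hx.1)) E), hx.1⟩
  · filter_upwards [ae_restrict_mem measurableSet_Ioi] with x hx
    exact (Real.rpow_pos_of_pos (Real.sinh_pos_iff.2 (lt_trans hr hx)) E).le

lemma aux_int_rpow {A : ℝ} (hA : -1 < A) {r : ℝ} (hr : 0 < r) :
    ∫ x in Ioo 0 r, x ^ A = r ^ (A+1) / (A+1) := by
  rw [← integral_Ioc_eq_integral_Ioo, ← intervalIntegral.integral_of_le hr.le,
    integral_rpow (Or.inl hA), Real.zero_rpow (by linarith), sub_zero]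

lemma aux_F_le_small {A : ℝ} (hA : -1 < A) {r : ℝ} (hr : 0 < r) (hr1 : r ≤ 1) :
    ∫ ρ in Ioo 0 r, Real.sinh ρ ^ A ≤ max 1 (Real.exp A) * (r ^ (A+1) / (A+1)) := by
  have h := setIntegral_mono_on (μ := volume) (s := Ioo 0 r)
      (f := fun ρ => Real.sinh ρ ^ A) (g := fun x => max 1 (Real.exp (1*A)) * x ^ A)
      (aux_integrableF hA hr) ?_ measurableSet_Ioo ?_
  · rw [integral_const_mul, aux_int_rpow hA hr, one_mul] at h
    exact h
  · have : IntegrableOn (fun x : ℝ => x ^ A) (Ioo 0 r) := by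
      have := (intervalIntegral.intervalIntegrable_rpow' (a := 0) (b := r) hA)
      rwa [intervalIntegrable_iff_integrableOn_Ioo_of_le hr.le] at this
    exact this.const_mul _
  · intro x hx
    exact aux_sinh_rpow_le hx.1 (le_trans hx.2.le hr1)

lemma aux_G_le_small {E : ℝ} (hE1 : -1 ≤ E) (hE : E < 0) {r : ℝ} (hr : 0 < r) (hr1 : r ≤ 1) :
    ∫ ρ in Ioi r, Real.sinh ρ ^ E ≤ -Real.log r + ∫ ρ in Ioi 1, Real.sinh ρ ^ E := by
  have hsplit : ∫ ρ in Ioi r, Real.sinh ρ ^ E =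
      (∫ ρ in Ioc r 1, Real.sinh ρ ^ E) + ∫ ρ in Ioi 1, Real.sinh ρ ^ E := by
    rw [← setIntegral_union (Ioc_disjoint_Ioi le_rfl) measurableSet_Ioi
      ((aux_integrableG hE hr).mono_set Ioc_subset_Ioi_self)
      (aux_integrableG hE one_pos), Ioc_union_Ioi_eq_Ioi hr1]
  rw [hsplit]
  have h2 : (∫ ρ in Ioc r 1, Real.sinh ρ ^ E) ≤ ∫ x in Ioc r 1, x⁻¹ := by
    refine setIntegral_mono_on ((aux_integrableG hE hr).mono_set Ioc_subset_Ioi_self) ?_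
      measurableSet_Ioc ?_
    · have : IntervalIntegrable (fun x : ℝ => x⁻¹) volume r 1 := by
        apply intervalIntegral.intervalIntegrable_inv (f := fun x => x)
        · intro x hx
          rw [uIcc_of_le hr1] at hx
          exact ne_of_gt (lt_of_lt_of_le hr hx.1)
        · exact continuousOn_id
      rwa [intervalIntegrable_iff_integrableOn_Ioc_of_le hr1] at this
    · intro x hx
      have hx0 : 0 < x := lt_trans hr hx.1
      calc Real.sinh x ^ E ≤ x ^ E :=
          Real.rpow_le_rpow_of_nonpos hx0 (aux_self_le_sinh hx0.le) hE.le
        _ ≤ x ^ (-1 : ℝ) := Real.rpow_le_rpow_of_exponent_ge hx0 hx.2 hE1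
        _ = x⁻¹ := Real.rpow_neg_one x
  have h3 : ∫ x in Ioc r 1, x⁻¹ = -Real.log r := by
    rw [← intervalIntegral.integral_of_le hr1, integral_inv (by
      rw [uIcc_of_le hr1]; intro h; exact absurd h.1 (not_le.2 hr)),
      Real.log_div one_ne_zero (ne_of_gt hr), Real.log_one, zero_sub]
  linarith

lemma aux_int_exp_Ioi {E : ℝ} (hE : E < 0) (r : ℝ) :
    ∫ x in Ioi r, Real.exp (E * x) = Real.exp (E * r) / (-E) := by
  have hderiv : ∀ x ∈ Ici r, HasDerivAt (fun y => Real.exp (E * y) / E)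
      (Real.exp (E * x)) x := by
    intro x _
    have h1 : HasDerivAt (fun y : ℝ => E * y) (E * 1) x := (hasDerivAt_id x).const_mul E
    have := (h1.exp).div_const E
    rw [mul_one, mul_div_assoc, div_self (ne_of_lt hE), mul_one] at this
    exact this
  have hint : IntegrableOn (fun x => Real.exp (E * x)) (Ioi r) := by
    have := exp_neg_integrableOn_Ioi r (neg_pos.2 hE)
    refine this.congr_fun ?_ measurableSet_Ioi
    intro x _; ring_nf
  have htend : Filter.Tendsto (fun y => Real.exp (E * y) / E) Filter.atTop (nhds 0) := by
    have h1 : Filter.Tendsto (fun y : ℝ => -E * y) Filter.atTop Filter.atTop :=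
      Filter.Tendsto.const_mul_atTop (neg_pos.2 hE) Filter.tendsto_id
    have h2 : Filter.Tendsto (fun y : ℝ => Real.exp (E * y)) Filter.atTop (nhds 0) := by
      have := Real.tendsto_exp_neg_atTop_nhds_zero.comp h1
      refine this.congr fun y => ?_
      simp only [Function.comp]; ring_nf
    simpa using h2.div_const E
  have := MeasureTheory.integral_Ioi_of_hasDerivAt_of_tendsto' hderiv hint htend
  rw [this, zero_sub, div_neg]

lemma aux_int_exp_interval {c : ℝ} (hc : c ≠ 0) (a b : ℝ) :
    ∫ x in a..b, Real.exp (c * x) = (Real.exp (c * b) - Real.exp (c * a)) / c := by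
  have hderiv : ∀ x ∈ uIcc a b, HasDerivAt (fun y => Real.exp (c * y) / c)
      (Real.exp (c * x)) x := by
    intro x _
    have h1 : HasDerivAt (fun y : ℝ => c * y) (c * 1) x := (hasDerivAt_id x).const_mul c
    have := (h1.exp).div_const c
    rw [mul_one, mul_div_assoc, div_self hc, mul_one] at this
    exact this
  have := intervalIntegral.integral_eq_sub_of_hasDerivAt hderiv
    ((Real.continuous_exp.comp (continuous_const.mul continuous_id)).intervalIntegrable a b)
  rw [this]
  ring

lemma aux_sinh_rpow_le_big {A A' x : ℝ} (hAA' : A ≤ A') (hA' : 0 ≤ A') (hx : 1 ≤ x) :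
    Real.sinh x ^ A ≤ max 1 ((1/4:ℝ) ^ A) * Real.exp (A' * x) := by
  have hx0 : (0:ℝ) < x := lt_of_lt_of_le one_pos hx
  have hexp : (0:ℝ) < Real.exp (A' * x) := Real.exp_pos _
  rcases le_or_gt 0 A with hA | hA
  · calc Real.sinh x ^ A ≤ (Real.exp x) ^ A :=
        Real.rpow_le_rpow (Real.sinh_pos_iff.2 hx0).le aux_sinh_le_exp hA
      _ = Real.exp (x * A) := (Real.exp_mul x A).symm
      _ ≤ Real.exp (A' * x) := Real.exp_le_exp.2 (by nlinarith)
      _ ≤ max 1 ((1/4:ℝ) ^ A) * Real.exp (A' * x) := by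
        nlinarith [le_max_left (1:ℝ) ((1/4:ℝ)^A)]
  · calc Real.sinh x ^ A ≤ (Real.exp x / 4) ^ A :=
        Real.rpow_le_rpow_of_nonpos (by positivity) (aux_quarter_exp_le_sinh hx) hA.le
      _ = (1/4:ℝ) ^ A * Real.exp (x * A) := by
        rw [div_eq_mul_one_div, mul_comm, Real.mul_rpow (by norm_num) (Real.exp_pos x).le,
          Real.exp_mul]
      _ ≤ (1/4:ℝ) ^ A * Real.exp (A' * x) := by
        have : Real.exp (x * A) ≤ Real.exp (A' * x) := Real.exp_le_exp.2 (by nlinarith)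
        nlinarith [Real.rpow_pos_of_pos (show (0:ℝ) < 1/4 by norm_num) A]
      _ ≤ max 1 ((1/4:ℝ) ^ A) * Real.exp (A' * x) := by
        nlinarith [le_max_right (1:ℝ) ((1/4:ℝ)^A)]

lemma aux_F_le_big {A A' : ℝ} (hA : -1 < A) (hA' : 0 < A') (hAA' : A ≤ A') {r : ℝ} (hr : 1 ≤ r) :
    ∫ ρ in Ioo 0 r, Real.sinh ρ ^ A ≤
      ((∫ ρ in Ioo 0 1, Real.sinh ρ ^ A) + max 1 ((1/4:ℝ) ^ A) / A') * Real.exp (A' * r) := by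
  have hr0 : (0:ℝ) < r := lt_of_lt_of_le one_pos hr
  set C := max 1 ((1/4:ℝ) ^ A) with hC
  have hCpos : 0 < C := lt_of_lt_of_le one_pos (le_max_left _ _)
  have hIco : IntegrableOn (fun ρ => Real.sinh ρ ^ A) (Ico 1 r) := by
    refine ((aux_contOn ?_).integrableOn_compact isCompact_Icc).mono_set Ico_subset_Icc_self
    intro x hx; exact lt_of_lt_of_le one_pos hx.1
  have hsplit : ∫ ρ in Ioo 0 r, Real.sinh ρ ^ A =
      (∫ ρ in Ioo 0 1, Real.sinh ρ ^ A) + ∫ ρ in Ico 1 r, Real.sinh ρ ^ A := by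
    rw [← setIntegral_union (Set.disjoint_left.2 fun x hx hx' => absurd hx.2 (not_lt.2 hx'.1))
      measurableSet_Ico (aux_integrableF hA one_pos) hIco, Ioo_union_Ico_eq_Ioo one_pos hr]
  have hexpint : IntegrableOn (fun x => C * Real.exp (A' * x)) (Ico 1 r) :=
    (((Real.continuous_exp.comp (continuous_const.mul continuous_id)).continuousOn.const_smul
      C).integrableOn_compact (isCompact_Icc (a := (1:ℝ)) (b := r))).mono_set Ico_subset_Icc_self
  have h2 : (∫ ρ in Ico 1 r, Real.sinh ρ ^ A) ≤ ∫ x in Ico 1 r, C * Real.exp (A' * x) :=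
    setIntegral_mono_on hIco hexpint measurableSet_Ico
      (fun x hx => aux_sinh_rpow_le_big hAA' hA'.le hx.1)
  have h3 : ∫ x in Ico 1 r, C * Real.exp (A' * x) ≤ C * (Real.exp (A' * r) / A') := by
    rw [integral_const_mul, integral_Ico_eq_integral_Ioo, ← integral_Ioc_eq_integral_Ioo,
      ← intervalIntegral.integral_of_le hr, aux_int_exp_interval (ne_of_gt hA')]
    have : (Real.exp (A' * r) - Real.exp (A' * 1)) / A' ≤ Real.exp (A' * r) / A' := by
      gcongr
      nlinarith [Real.exp_pos (A' * 1)]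
    nlinarith
  have hF1 : 0 < ∫ ρ in Ioo 0 1, Real.sinh ρ ^ A := aux_Fpos hA one_pos
  have hexp1 : (1:ℝ) ≤ Real.exp (A' * r) := by
    rw [← Real.exp_zero]; exact Real.exp_le_exp.2 (by nlinarith)
  have hCA : 0 < C / A' := by positivity
  calc ∫ ρ in Ioo 0 r, Real.sinh ρ ^ A
      ≤ (∫ ρ in Ioo 0 1, Real.sinh ρ ^ A) + C * (Real.exp (A' * r) / A') := by
        rw [hsplit]; linarith
    _ ≤ ((∫ ρ in Ioo 0 1, Real.sinh ρ ^ A) + C / A') * Real.exp (A' * r) := by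
        rw [add_mul]
        have : C * (Real.exp (A' * r) / A') = C / A' * Real.exp (A' * r) := by ring
        nlinarith

lemma aux_G_le_big {E : ℝ} (hE : E < 0) {r : ℝ} (hr : 1 ≤ r) :
    ∫ ρ in Ioi r, Real.sinh ρ ^ E ≤ (1/4:ℝ) ^ E * (Real.exp (E * r) / (-E)) := by
  have hr0 : (0:ℝ) < r := lt_of_lt_of_le one_pos hr
  have h1 : (∫ ρ in Ioi r, Real.sinh ρ ^ E) ≤ ∫ x in Ioi r, (1/4:ℝ) ^ E * Real.exp (E * x) := by
    refine setIntegral_mono_on (aux_integrableG hE hr0) ?_ measurableSet_Ioi ?_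
    · have : IntegrableOn (fun x => Real.exp (E * x)) (Ioi r) := by
        refine (exp_neg_integrableOn_Ioi r (neg_pos.2 hE)).congr_fun ?_ measurableSet_Ioi
        intro x _; ring_nf
      exact this.const_mul _
    · intro x hx
      have hx1 : (1:ℝ) ≤ x := le_trans hr hx.le
      calc Real.sinh x ^ E ≤ (Real.exp x / 4) ^ E :=
          Real.rpow_le_rpow_of_nonpos (by positivity) (aux_quarter_exp_le_sinh hx1) hE.le
        _ = (1/4:ℝ) ^ E * Real.exp (E * x) := by
          rw [div_eq_mul_one_div, mul_comm, Real.mul_rpow (by norm_num) (Real.exp_pos x).le,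
            ← Real.exp_mul, mul_comm x E]
  rw [integral_const_mul, aux_int_exp_Ioi hE] at h1
  exact h1

set_option maxHeartbeats 1000000 in
lemma aux_master {A E a b : ℝ} (hA : -1 < A) (hE1 : -1 ≤ E) (hE : E < 0)
    (ha : 0 < a) (hb : 0 < b) (hcond : a * A + b * E ≤ 0) :
    ∃ M : ℝ, 0 < M ∧ ∀ r : ℝ, 0 < r →
      (∫ ρ in Ioo 0 r, Real.sinh ρ ^ A) ^ a * (∫ ρ in Ioi r, Real.sinh ρ ^ E) ^ b ≤ M := by
  obtain ⟨C₁, hC₁⟩ : ∃ c : ℝ, c = max 1 (Real.exp A) / (A + 1) := ⟨_, rfl⟩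
  have hC₁pos : 0 < C₁ := by
    rw [hC₁]
    exact div_pos (lt_of_lt_of_le one_pos (le_max_left _ _)) (by linarith)
  obtain ⟨G1, hG1⟩ : ∃ c : ℝ, c = ∫ ρ in Ioi 1, Real.sinh ρ ^ E := ⟨_, rfl⟩
  have hG1pos : 0 < G1 := hG1 ▸ aux_Gpos hE one_pos
  obtain ⟨ε, hε⟩ : ∃ c : ℝ, c = a * (A + 1) / (2 * b) := ⟨_, rfl⟩
  have hεpos : 0 < ε := by
    rw [hε]; exact div_pos (mul_pos ha (by linarith)) (by linarith)
  obtain ⟨C₂, hC₂⟩ : ∃ c : ℝ, c = 1 / ε + G1 := ⟨_, rfl⟩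
  have hC₂pos : 0 < C₂ := by rw [hC₂]; positivity
  obtain ⟨Msmall, hMs⟩ : ∃ c : ℝ, c = C₁ ^ a * C₂ ^ b := ⟨_, rfl⟩
  have hMspos : 0 < Msmall := by
    rw [hMs]
    exact mul_pos (Real.rpow_pos_of_pos hC₁pos a) (Real.rpow_pos_of_pos hC₂pos b)
  obtain ⟨A', hA'⟩ : ∃ c : ℝ, c = if 0 < A then A else b * (-E) / (2 * a) := ⟨_, rfl⟩
  have hA'pos : 0 < A' := by
    rw [hA']; split_ifs with h
    · exact h
    · have : 0 < -E := by linarith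
      positivity
  have hAA' : A ≤ A' := by
    rw [hA']; split_ifs with h
    · exact le_rfl
    · push_neg at h
      refine le_trans h ?_
      have : 0 < -E := by linarith
      positivity
  have hcond' : a * A' + b * E ≤ 0 := by
    rw [hA']; split_ifs with h
    · exact hcond
    · have he : a * (b * (-E) / (2 * a)) = b * (-E) / 2 := by
        field_simp
      rw [he]; nlinarith
  obtain ⟨K₁, hK₁⟩ : ∃ c : ℝ,
      c = (∫ ρ in Ioo 0 1, Real.sinh ρ ^ A) + max 1 ((1/4:ℝ) ^ A) / A' := ⟨_, rfl⟩
  have hK₁pos : 0 < K₁ := by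
    rw [hK₁]
    have h1 := aux_Fpos hA one_pos
    have h2 : (0:ℝ) < max 1 ((1/4:ℝ) ^ A) / A' :=
      div_pos (lt_of_lt_of_le one_pos (le_max_left _ _)) hA'pos
    linarith
  obtain ⟨K₂, hK₂⟩ : ∃ c : ℝ, c = (1/4:ℝ) ^ E / (-E) := ⟨_, rfl⟩
  have hK₂pos : 0 < K₂ := by
    rw [hK₂]
    exact div_pos (Real.rpow_pos_of_pos (by norm_num) E) (by linarith)
  obtain ⟨Mbig, hMb⟩ : ∃ c : ℝ, c = K₁ ^ a * K₂ ^ b := ⟨_, rfl⟩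
  have hMbpos : 0 < Mbig := by
    rw [hMb]
    exact mul_pos (Real.rpow_pos_of_pos hK₁pos a) (Real.rpow_pos_of_pos hK₂pos b)
  refine ⟨max Msmall Mbig, lt_of_lt_of_le hMspos (le_max_left _ _), ?_⟩
  intro r hr
  have hFpos := aux_Fpos hA hr
  have hGpos := aux_Gpos hE hr
  rcases le_or_gt r 1 with hr1 | hr1
  -- small r
  · have hF : (∫ ρ in Ioo 0 r, Real.sinh ρ ^ A) ≤ C₁ * r ^ (A + 1) := by
      have h := aux_F_le_small hA hr hr1
      rw [hC₁]
      calc (∫ ρ in Ioo 0 r, Real.sinh ρ ^ A)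
          ≤ max 1 (Real.exp A) * (r ^ (A+1) / (A+1)) := h
        _ = max 1 (Real.exp A) / (A+1) * r ^ (A+1) := by ring
    have hlog : -Real.log r ≤ r ^ (-ε) / ε := by
      have h1 : -ε * Real.log r ≤ r ^ (-ε) := by
        have h0 := Real.log_le_sub_one_of_pos (Real.rpow_pos_of_pos hr (-ε))
        rw [Real.log_rpow hr] at h0
        linarith
      rw [le_div_iff₀ hεpos]
      nlinarith
    have hrε : (1:ℝ) ≤ r ^ (-ε) := by
      have := Real.rpow_le_rpow_of_exponent_ge hr hr1 (show -ε ≤ 0 by linarith)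
      rwa [Real.rpow_zero] at this
    have hG : (∫ ρ in Ioi r, Real.sinh ρ ^ E) ≤ C₂ * r ^ (-ε) := by
      have h := aux_G_le_small hE1 hE hr hr1
      rw [← hG1] at h
      rw [hC₂, add_mul]
      have e1 : 1 / ε * r ^ (-ε) = r ^ (-ε) / ε := by ring
      rw [e1]
      nlinarith [mul_le_mul_of_nonneg_left hrε hG1pos.le]
    have hexp : (A+1) * a + -ε * b = a * (A+1) / 2 := by
      rw [hε]; field_simp; ring
    have hhalf : 0 < a * (A+1) / 2 := by
      have : 0 < A + 1 := by linarith
      positivity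
    calc (∫ ρ in Ioo 0 r, Real.sinh ρ ^ A) ^ a * (∫ ρ in Ioi r, Real.sinh ρ ^ E) ^ b
        ≤ (C₁ * r ^ (A+1)) ^ a * (C₂ * r ^ (-ε)) ^ b :=
          mul_le_mul (Real.rpow_le_rpow hFpos.le hF ha.le)
            (Real.rpow_le_rpow hGpos.le hG hb.le)
            (Real.rpow_nonneg hGpos.le b) (Real.rpow_nonneg (by positivity) a)
      _ = Msmall * (r ^ ((A+1)*a) * r ^ (-ε*b)) := by
          rw [Real.mul_rpow hC₁pos.le (Real.rpow_nonneg hr.le _),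
            Real.mul_rpow hC₂pos.le (Real.rpow_nonneg hr.le _),
            ← Real.rpow_mul hr.le, ← Real.rpow_mul hr.le, hMs]
          ring
      _ = Msmall * r ^ (a * (A+1) / 2) := by
          rw [← Real.rpow_add hr, hexp]
      _ ≤ Msmall * 1 := by
          have : r ^ (a * (A+1) / 2) ≤ 1 := Real.rpow_le_one hr.le hr1 hhalf.le
          nlinarith
      _ ≤ max Msmall Mbig := by rw [mul_one]; exact le_max_left _ _
  -- big r
  · have hF' := aux_F_le_big hA hA'pos hAA' hr1.le
    rw [← hK₁] at hF'
    have hG' := aux_G_le_big hE hr1.le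
    have hGeq : (1/4:ℝ) ^ E * (Real.exp (E * r) / (-E)) = K₂ * Real.exp (E * r) := by
      rw [hK₂]; ring
    rw [hGeq] at hG'
    have hexpneg : Real.exp ((a * A' + b * E) * r) ≤ 1 := by
      rw [← Real.exp_zero]
      exact Real.exp_le_exp.2 (by nlinarith)
    calc (∫ ρ in Ioo 0 r, Real.sinh ρ ^ A) ^ a * (∫ ρ in Ioi r, Real.sinh ρ ^ E) ^ b
        ≤ (K₁ * Real.exp (A' * r)) ^ a * (K₂ * Real.exp (E * r)) ^ b :=
          mul_le_mul (Real.rpow_le_rpow hFpos.le hF' ha.le)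
            (Real.rpow_le_rpow hGpos.le hG' hb.le)
            (Real.rpow_nonneg hGpos.le b) (Real.rpow_nonneg (by positivity) a)
      _ = (K₁ ^ a * K₂ ^ b) * (Real.exp (A' * r * a) * Real.exp (E * r * b)) := by
          rw [Real.mul_rpow hK₁pos.le (Real.exp_pos _).le,
            Real.mul_rpow hK₂pos.le (Real.exp_pos _).le,
            ← Real.exp_mul, ← Real.exp_mul]
          ring
      _ = Mbig * Real.exp ((a * A' + b * E) * r) := by
          rw [← Real.exp_add, hMb]
          congr 1
          ring
      _ ≤ Mbig * 1 := by nlinarith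
      _ ≤ max Msmall Mbig := by rw [mul_one]; exact le_max_right _ _

/-- Positivity of the Hardy quantity `D₂` for the hyperbolic weights: the infimum
over `r > 0` of `(∫_0^r (sinh ρ)^{α+n-1} dρ)^{1/q} (∫_r^∞ (sinh ρ)^{β(1-p')+n-1} dρ)^{1/p'}`
is strictly positive. -/
theorem hyperbolic_conjugate_hardy_infimum_pos
    (n : ℕ) (hn : 2 ≤ n)
    (p q p' : ℝ) (hp : p ∈ Set.Ioo (0:ℝ) 1) (hq : q < 0) (hp' : p' = p / (p - 1))
    (α β : ℝ)
    (hα : α + n > 0) (hβ₀ : 0 ≤ β * (1 - p') + n) (hβ₁ : β * (1 - p') + n < 1)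
    (hcond : (α + n) / q + (β * (1 - p') + n) / p' ≥ 1 / q + 1 / p') :
    0 < sInf ((fun r : ℝ =>
      (∫ ρ in Set.Ioo 0 r, Real.sinh ρ ^ (α + n - 1)) ^ (1 / q) *
        (∫ ρ in Set.Ioi r, Real.sinh ρ ^ (β * (1 - p') + n - 1)) ^ (1 / p'))
      '' Set.Ioi (0:ℝ)) := by
  obtain ⟨hp0, hp1⟩ := hp
  have hp'neg : p' < 0 := by
    rw [hp']; exact div_neg_of_pos_of_neg hp0 (by linarith)
  have hA : (-1:ℝ) < α + n - 1 := by linarith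
  have hE1 : (-1:ℝ) ≤ β * (1 - p') + n - 1 := by linarith
  have hE : β * (1 - p') + n - 1 < 0 := by linarith
  have ha : 0 < -(1/q) := neg_pos.2 (one_div_neg.2 hq)
  have hb : 0 < -(1/p') := neg_pos.2 (one_div_neg.2 hp'neg)
  have hcond2 : (-(1/q)) * (α + n - 1) + (-(1/p')) * (β * (1 - p') + n - 1) ≤ 0 := by
    have e1 : (α + n) / q - 1 / q = (α + n - 1) / q := div_sub_div_same _ _ _
    have e2 : (β * (1 - p') + n) / p' - 1 / p' = (β * (1 - p') + n - 1) / p' :=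
      div_sub_div_same _ _ _
    have h2 : 0 ≤ (α + n - 1) / q + (β * (1 - p') + n - 1) / p' := by linarith
    rw [div_eq_mul_one_div (α + (n:ℝ) - 1) q, div_eq_mul_one_div (β * (1 - p') + (n:ℝ) - 1) p'] at h2
    nlinarith
  obtain ⟨M, hM, hbound⟩ := aux_master hA hE1 hE ha hb hcond2
  refine lt_of_lt_of_le (inv_pos.2 hM)
    (le_csInf ⟨_, Set.mem_image_of_mem _ (Set.mem_Ioi.2 one_pos)⟩ ?_)
  rintro x ⟨r, hr, rfl⟩
  rw [Set.mem_Ioi] at hr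
  have hF := aux_Fpos hA hr
  have hG := aux_Gpos hE hr
  dsimp only
  rw [show (1:ℝ)/q = -(-(1/q)) from (neg_neg _).symm,
    show (1:ℝ)/p' = -(-(1/p')) from (neg_neg _).symm,
    Real.rpow_neg hF.le, Real.rpow_neg hG.le, ← mul_inv]
  exact inv_anti₀
    (mul_pos (Real.rpow_pos_of_pos hF _) (Real.rpow_pos_of_pos hG _)) (hbound r hr)
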